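/- Let ε > 0 and k ≥ 1, and let S₁, …, S_k, U₁, …, U_k, Δ₁, …, Δ_k be reals with Δ_i > 0, S_i ≤ 3·U_i and U_i ≤ 3·Δ_i for all i, Δ_{i+1} ≥ (1+ε)·Δ_i for all 1 ≤ i ≤ k−1, and Δ_k ≤ S_k. Then ∑_{i=1}^{k} S_i ≤ 9·(1 + 1/ε)·S_k. -/

import Mathlib

/-- amortized migration bound. If `S_i ≤ 3·U_i`, `U_i ≤ 3·Δ_i`,
the `Δ_i` are positive and grow by a factor of at least `1+ε`, and `Δ_k ≤ S_k`,
then `∑_{i=1}^{k} S_i ≤ 9·(1 + 1/ε)·S_k`. -/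
theorem amortized_migration_bound (ε : ℝ) (hε : 0 < ε) (k : ℕ) (hk : 1 ≤ k)
    (S U Δ : ℕ → ℝ)
    (hΔpos : ∀ i, 1 ≤ i → i ≤ k → 0 < Δ i)
    (hSU : ∀ i, 1 ≤ i → i ≤ k → S i ≤ 3 * U i)
    (hUΔ : ∀ i, 1 ≤ i → i ≤ k → U i ≤ 3 * Δ i)
    (hgrow : ∀ i, 1 ≤ i → i ≤ k - 1 → (1 + ε) * Δ i ≤ Δ (i + 1))
    (hΔS : Δ k ≤ S k) :
    ∑ i ∈ Finset.Icc 1 k, S i ≤ 9 * (1 + 1 / ε) * S k := by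
  have h1ε : (0:ℝ) < 1 + ε := by linarith
  set r : ℝ := 1 / (1 + ε) with hr
  have hr0 : 0 ≤ r := by positivity
  have hr1 : r < 1 := by
    rw [hr, div_lt_one h1ε]; linarith
  -- key: Δ i * (1+ε)^d ≤ Δ k when i + d = k
  have key : ∀ d i, 1 ≤ i → i + d = k → Δ i * (1 + ε) ^ d ≤ Δ k := by
    intro d
    induction d with
    | zero => intro i hi hik; simp [← hik]
    | succ d ih =>
      intro i hi hik
      have hik' : i ≤ k - 1 := by omega
      have h1 : (1 + ε) * Δ i ≤ Δ (i + 1) := hgrow i hi hik'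
      have h2 : Δ (i + 1) * (1 + ε) ^ d ≤ Δ k := ih (i + 1) (by omega) (by omega)
      calc Δ i * (1 + ε) ^ (d + 1) = ((1 + ε) * Δ i) * (1 + ε) ^ d := by ring
        _ ≤ Δ (i + 1) * (1 + ε) ^ d := by
            apply mul_le_mul_of_nonneg_right h1 (by positivity)
        _ ≤ Δ k := h2
  have hΔk : 0 < Δ k := hΔpos k hk le_rfl
  -- S i ≤ 9 * Δ k * r ^ (k - i)
  have hSbound : ∀ i ∈ Finset.Icc 1 k, S i ≤ 9 * Δ k * r ^ (k - i) := by
    intro i hi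
    rw [Finset.mem_Icc] at hi
    have hΔi := key (k - i) i hi.1 (by omega)
    have hS : S i ≤ 9 * Δ i := by
      have := hSU i hi.1 hi.2
      have := hUΔ i hi.1 hi.2
      linarith
    have hpow : (0:ℝ) < (1 + ε) ^ (k - i) := by positivity
    have : Δ i ≤ Δ k * r ^ (k - i) := by
      rw [hr, div_pow, one_pow, mul_one_div, le_div_iff₀ hpow]
      linarith
    linarith
  calc ∑ i ∈ Finset.Icc 1 k, S i
      ≤ ∑ i ∈ Finset.Icc 1 k, 9 * Δ k * r ^ (k - i) := Finset.sum_le_sum hSbound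
    _ = 9 * Δ k * ∑ i ∈ Finset.Icc 1 k, r ^ (k - i) := by rw [Finset.mul_sum]
    _ = 9 * Δ k * ∑ j ∈ Finset.range k, r ^ j := by
        congr 1
        apply Finset.sum_nbij' (fun i => k - i) (fun j => k - j) <;>
          intro a ha <;> simp_all <;> omega
    _ ≤ 9 * Δ k * (1 / (1 - r)) := by
        apply mul_le_mul_of_nonneg_left _ (by positivity)
        have hne : r ≠ 1 := ne_of_lt hr1
        rw [geom_sum_eq hne]
        have h1 : (r ^ k - 1) / (r - 1) = (1 - r ^ k) / (1 - r) := by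
          rw [← neg_div_neg_eq]; ring_nf
        rw [h1]
        have hrk : (0:ℝ) ≤ r ^ k := by positivity
        gcongr
        · linarith
    _ = 9 * (1 + 1/ε) * Δ k := by
        rw [hr]; field_simp; ring_nf; field_simp
    _ ≤ 9 * (1 + 1/ε) * S k := by
        apply mul_le_mul_of_nonneg_left hΔS (by positivity)
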